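/- Let (x, λ, μ, ς) be a stationary point of Ξ, where the two surfaces Y_c and Z_c are disjoint. Then the following are equivalent: (a) μ = 0; (b) λ = 0; (c) x ∉ X_c = Y_c × Z_c. -/
import Mathlib


open scoped RealInnerProductSpace

/-- At a stationary point of Ξ with disjoint surfaces: μ = 0 ↔ λ = 0 ↔ x ∉ X_c. -/
theorem stmt_8 (n : ℕ) (A : Matrix (Fin n) (Fin n) ℝ) (hA : A.PosDef)
    (r α η : ℝ) (hr : 0 < r) (hα : 0 < α)
    (f c : EuclideanSpace ℝ (Fin n))
    (y z : EuclideanSpace ℝ (Fin n)) (lam mu sig : ℝ)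
    (e1 : y - z + lam • (Matrix.toEuclideanLin A y) = 0)
    (e2 : z - y + (mu * sig) • (z - c) - mu • f = 0)
    (e3 : 1 / 2 * (⟪y, Matrix.toEuclideanLin A y⟫ - r ^ 2) = 0)
    (e4 : (1 / 2 * ‖z - c‖ ^ 2) * sig - (sig ^ 2 / (2 * α) + η * sig) - ⟪f, z - c⟫ = 0)
    (e5 : mu * (1 / 2 * ‖z - c‖ ^ 2 - (sig / α + η)) = 0)
    (hdisj : ∀ w : EuclideanSpace ℝ (Fin n),
      ¬(1 / 2 * (⟪w, Matrix.toEuclideanLin A w⟫ - r ^ 2) = 0 ∧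
        α / 2 * (1 / 2 * ‖w - c‖ ^ 2 - η) ^ 2 - ⟪f, w - c⟫ = 0)) :
    List.TFAE [mu = 0, lam = 0,
      ¬(1 / 2 * (⟪y, Matrix.toEuclideanLin A y⟫ - r ^ 2) = 0 ∧
        α / 2 * (1 / 2 * ‖z - c‖ ^ 2 - η) ^ 2 - ⟪f, z - c⟫ = 0)] := by
  tfae_have 1 → 2 := by
    intro hmu
    subst hmu
    simp only [zero_mul, zero_smul, sub_zero, add_zero] at e2
    have hzy : z = y := by
      have := sub_eq_zero.mp e2
      exact this
    by_contra hlam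
    have hAy : Matrix.toEuclideanLin A y = 0 := by
      rw [hzy, sub_self, zero_add] at e1
      exact (smul_eq_zero.mp e1).resolve_left hlam
    rw [hAy] at e3
    simp at e3
    nlinarith
  tfae_have 2 → 3 := by
    intro hlam
    subst hlam
    simp only [zero_smul, add_zero] at e1
    have hyz : y = z := sub_eq_zero.mp e1
    intro ⟨h1, h2⟩
    exact hdisj y ⟨e3, by rw [hyz]; exact h2⟩
  tfae_have 3 → 1 := by
    intro h3
    by_contra hmu
    apply h3
    refine ⟨e3, ?_⟩
    have h5 : 1 / 2 * ‖z - c‖ ^ 2 - (sig / α + η) = 0 :=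
      (mul_eq_zero.mp e5).resolve_left hmu
    have hΛ : 1 / 2 * ‖z - c‖ ^ 2 = sig / α + η := by linarith
    rw [hΛ]
    have hα' : α ≠ 0 := ne_of_gt hα
    rw [hΛ] at e4
    field_simp at e4 ⊢
    nlinarith [e4]
  tfae_finish
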